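/- Let η ∈ (0,1/4). There exist positive constants δ_0, B_1, B_2 (depending only on η) such that for every δ with |δ| ≤ δ_0, denoting by a(δ) the unique zero of f_δ := f + δ in (1/4, 3/4), one has B_1 (q - a(δ)) ≤ f(q) + δ ≤ B_2 (q - a(δ)) for all q ∈ (a(δ), 1-η). -/
import Mathlib


noncomputable def f (u : ℝ) : ℝ := u * (1 - u) * (u - 1/2)

theorem f_delta_linear_bounds (η : ℝ) (hη : η ∈ Set.Ioo (0:ℝ) (1/4)) :
    ∃ δ0 > (0:ℝ), ∃ B1 > (0:ℝ), ∃ B2 > (0:ℝ), ∀ δ : ℝ, |δ| ≤ δ0 →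
      ∀ a : ℝ, a ∈ Set.Ioo (1/4 : ℝ) (3/4) → f a + δ = 0 →
      ∀ q : ℝ, q ∈ Set.Ioo a (1 - η) →
        B1 * (q - a) ≤ f q + δ ∧ f q + δ ≤ B2 * (q - a) := by
  obtain ⟨hη0, hη4⟩ := hη
  refine ⟨3*η/64, by linarith, η/2, by linarith, 3, by norm_num, ?_⟩
  intro δ hδ a ha hfa q hq
  obtain ⟨ha1, ha2⟩ := ha
  obtain ⟨hq1, hq2⟩ := hq
  obtain ⟨hd1, hd2⟩ := abs_le.mp hδ
  have hfa' : a * (1 - a) * (a - 1/2) = -δ := by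
    simp only [f] at hfa; linarith
  have h316 : (3:ℝ)/16 ≤ a * (1 - a) := by nlinarith
  have haup : a - 1/2 ≤ η/4 := by nlinarith [mul_nonneg (sub_nonneg.mpr h316) (le_of_lt hη0)]
  have halo : 1/2 - a ≤ η/4 := by nlinarith [mul_nonneg (sub_nonneg.mpr h316) (le_of_lt hη0)]
  have hqa : 0 < q - a := by linarith
  have hq1' : q < 1 - η := hq2
  have hD1 : η/2 ≤ -(q^2 + q*a + a^2) + 3/2*(q+a) - 1/2 := by
    nlinarith [mul_nonneg (le_of_lt hqa) (by linarith : (0:ℝ) ≤ 1 - η - q),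
      sq_nonneg (a - 1/2), sq_nonneg η, mul_pos hη0 hη0]
  have hD2 : -(q^2 + q*a + a^2) + 3/2*(q+a) - 1/2 ≤ 3 := by nlinarith
  have key : f q + δ = (q - a) * (-(q^2 + q*a + a^2) + 3/2*(q+a) - 1/2) := by
    simp only [f]; linear_combination hfa'
  constructor
  · rw [key]
    calc η/2 * (q - a) = (q - a) * (η/2) := by ring
    _ ≤ (q - a) * (-(q^2 + q*a + a^2) + 3/2*(q+a) - 1/2) :=
        mul_le_mul_of_nonneg_left hD1 (le_of_lt hqa)
  · rw [key]
    calc (q - a) * (-(q^2 + q*a + a^2) + 3/2*(q+a) - 1/2) ≤ (q - a) * 3 :=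
        mul_le_mul_of_nonneg_left hD2 (le_of_lt hqa)
    _ = 3 * (q - a) := by ring
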